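/- Let K ⊆ K₁ ⊆ K₂ ⊆ L be fields such that L/K is Galois, K₂/K is finite Galois, and there exists an infinite pairwise linearly disjoint family of finite proper subextensions of L/K₁ of the same degree and Galois over K. Then there also exists an infinite pairwise linearly disjoint family of finite proper subextensions of L/K₂ of the same degree and Galois over K. -/

import Mathlib

open IntermediateField Polynomial Module

section Aux

variable {K₁ L : Type*} [Field K₁] [Field L] [Algebra K₁ L]

theorem aux_finrank_sup_of_normal (A B : IntermediateField K₁ L)
    [FiniteDimensional K₁ A] [FiniteDimensional K₁ B]
    [Normal K₁ A] [Algebra.IsSeparable K₁ A]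
    (hAB : A ⊓ B = ⊥) :
    Module.finrank K₁ ↥(A ⊔ B) = Module.finrank K₁ A * Module.finrank K₁ B := by
  obtain ⟨α₀, hα₀⟩ := Field.exists_primitive_element K₁ A
  have hAeq : K₁⟮(α₀ : L)⟯ = A := by
    rw [← lift_adjoin_simple K₁ A α₀, hα₀, lift_top]
  set α : L := (α₀ : L) with hαdef
  have hint : IsIntegral K₁ α := (IsIntegral.of_finite K₁ α₀).map A.val
  have hintB : IsIntegral ↥B α := hint.tower_top
  have hminα : minpoly K₁ α = minpoly K₁ α₀ :=
    minpoly.algebraMap_eq (algebraMap ↥A L).injective α₀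
  have hsplitA : ((minpoly K₁ α).map (algebraMap K₁ ↥A)).Splits := by
    rw [hminα]
    exact Normal.splits inferInstance α₀
  -- the big polynomial
  set P : L[X] := (minpoly K₁ α).map (algebraMap K₁ L) with hPdef
  have hP0 : P ≠ 0 := Polynomial.map_ne_zero (minpoly.ne_zero hint)
  have hPfac : P = ((minpoly K₁ α).map (algebraMap K₁ ↥A)).map (algebraMap ↥A L) := by
    rw [Polynomial.map_map, ← IsScalarTower.algebraMap_eq]
  have hProots : ∀ z ∈ P.roots, z ∈ A := by
    intro z hz
    rw [hPfac, hsplitA.roots_map (algebraMap ↥A L : ↥A →+* L)] at hz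
    obtain ⟨w, _, rfl⟩ := Multiset.mem_map.1 hz
    exact w.2
  have hPsplits : P.Splits := by
    rw [hPdef]
    have := hsplitA.map (algebraMap ↥A L : ↥A →+* L)
    rwa [Polynomial.map_map, ← IsScalarTower.algebraMap_eq] at this
  -- the minimal polynomial over B, mapped to L
  set q : (↥B)[X] := minpoly ↥B α with hqdef
  set f : L[X] := q.map (algebraMap ↥B L) with hfdef
  have hq_dvd : q ∣ (minpoly K₁ α).map (algebraMap K₁ ↥B) :=
    minpoly.dvd_map_of_isScalarTower K₁ ↥B α
  have hf_dvd : f ∣ P := by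
    have := Polynomial.map_dvd (algebraMap ↥B L : ↥B →+* L) hq_dvd
    rwa [Polynomial.map_map, ← IsScalarTower.algebraMap_eq] at this
  have hf_monic : f.Monic := (minpoly.monic hintB).map _
  have hf_splits : f.Splits :=
    hPsplits.of_dvd hP0 hf_dvd
  have hf_eq : f = (f.roots.map fun z => X - C z).prod :=
    hf_splits.eq_prod_roots_of_monic hf_monic
  have hf_roots : ∀ z ∈ f.roots, z ∈ A := fun z hz =>
    hProots z (Multiset.mem_of_le (roots.le_of_dvd hP0 hf_dvd) hz)
  -- coefficients of f lie in A
  have hcoeffA : ∀ k, f.coeff k ∈ A := by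
    have hfT : f ∈ (Polynomial.mapAlgHom (A.val : ↥A →ₐ[K₁] L)).range := by
      rw [hf_eq]
      refine multiset_prod_mem _ ?_
      intro x hx
      obtain ⟨z, hz, rfl⟩ := Multiset.mem_map.1 hx
      exact ⟨X - C ⟨z, hf_roots z hz⟩, by simp⟩
    obtain ⟨g, hg⟩ := hfT
    intro k
    rw [← hg]
    simp only [Polynomial.mapAlgHom, AlgHom.coe_mk, Polynomial.coe_mapRingHom,
      Polynomial.coeff_map]
    exact (g.coeff k).2
  have hcoeffB : ∀ k, f.coeff k ∈ B := by
    intro k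
    rw [hfdef, Polynomial.coeff_map]
    exact (q.coeff k).2
  -- f descends to K₁
  have hlift : f ∈ Polynomial.lifts (algebraMap K₁ L) := by
    rw [lifts_iff_coeff_lifts]
    intro k
    have : f.coeff k ∈ A ⊓ B := ⟨hcoeffA k, hcoeffB k⟩
    rw [hAB, IntermediateField.mem_bot] at this
    exact this
  obtain ⟨r, hr_map, hr_deg, hr_monic⟩ :=
    Polynomial.lifts_and_degree_eq_and_monic hlift hf_monic
  have hr_root : Polynomial.aeval α r = 0 := by
    rw [Polynomial.aeval_def, ← Polynomial.eval_map, hr_map, hfdef, Polynomial.eval_map,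
      ← Polynomial.aeval_def, minpoly.aeval]
  have hdvd_r : minpoly K₁ α ∣ r := minpoly.dvd K₁ α hr_root
  have hdeg_qf : q.natDegree = f.natDegree := ((minpoly.monic hintB).natDegree_map _).symm
  have hdeg1 : (minpoly K₁ α).natDegree ≤ q.natDegree := by
    rw [hdeg_qf, ← natDegree_eq_of_degree_eq hr_deg]
    exact Polynomial.natDegree_le_of_dvd hdvd_r hr_monic.ne_zero
  have hdeg2 : q.natDegree ≤ (minpoly K₁ α).natDegree := by
    have := Polynomial.natDegree_le_of_dvd hq_dvd
      (Polynomial.map_ne_zero (minpoly.ne_zero hint))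
    rwa [(minpoly.monic hint).natDegree_map] at this
  have hdeg : q.natDegree = (minpoly K₁ α).natDegree := le_antisymm hdeg2 hdeg1
  -- now the finrank computation
  have hres : (adjoin ↥B {α}).restrictScalars K₁ = B ⊔ A := by
    rw [restrictScalars_adjoin_eq_sup, hAeq]
  have htower : Module.finrank K₁ ↥B * Module.finrank ↥B ↥(adjoin ↥B {α})
      = Module.finrank K₁ ↥(adjoin ↥B {α}) :=
    Module.finrank_mul_finrank _ _ _
  have hBα : Module.finrank ↥B ↥(adjoin ↥B {α}) = q.natDegree :=
    IntermediateField.adjoin.finrank hintB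
  have hres' : Module.finrank K₁ ↥((adjoin ↥B {α}).restrictScalars K₁)
      = Module.finrank K₁ ↥(adjoin ↥B {α}) := rfl
  have hAdeg : Module.finrank K₁ ↥A = (minpoly K₁ α).natDegree := by
    rw [← hAeq]
    exact IntermediateField.adjoin.finrank hint
  calc Module.finrank K₁ ↥(A ⊔ B) = Module.finrank K₁ ↥(B ⊔ A) := by rw [sup_comm]
    _ = Module.finrank K₁ ↥((adjoin ↥B {α}).restrictScalars K₁) := by rw [hres]
    _ = Module.finrank K₁ ↥B * Module.finrank ↥B ↥(adjoin ↥B {α}) := by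
        rw [hres', htower]
    _ = Module.finrank K₁ ↥A * Module.finrank K₁ ↥B := by
        rw [hBα, hdeg, ← hAdeg, mul_comm]

end Aux

section Aux2

variable {K₁ L : Type*} [Field K₁] [Field L] [Algebra K₁ L]

theorem aux_linearDisjoint_of_normal (A B : IntermediateField K₁ L)
    [FiniteDimensional K₁ A] [FiniteDimensional K₁ B]
    [Normal K₁ A] [Algebra.IsSeparable K₁ A]
    (hAB : A ⊓ B = ⊥) : A.LinearDisjoint B :=
  IntermediateField.LinearDisjoint.of_finrank_sup (aux_finrank_sup_of_normal A B hAB)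

theorem aux_eq_of_inf_eq_bot (A B N : IntermediateField K₁ L)
    [FiniteDimensional K₁ A] [FiniteDimensional K₁ B]
    [Normal K₁ A] [Algebra.IsSeparable K₁ A]
    (hAB : A ⊓ B = ⊥) (hBN : B ≤ N) (hNAB : N ≤ A ⊔ B) (hNA : A ⊓ N = ⊥) : N = B := by
  haveI : FiniteDimensional K₁ ↥(A ⊔ B) := IntermediateField.finiteDimensional_sup A B
  haveI : FiniteDimensional K₁ ↥N := FiniteDimensional.of_injective
    (IntermediateField.inclusion hNAB).toLinearMap (IntermediateField.inclusion hNAB).injective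
  have h1 := aux_finrank_sup_of_normal A N hNA
  have h2 := aux_finrank_sup_of_normal A B hAB
  have hsup : A ⊔ N = A ⊔ B := le_antisymm (sup_le le_sup_left hNAB) (sup_le_sup_left hBN _)
  rw [hsup, h2] at h1
  have hfr : Module.finrank K₁ ↥N = Module.finrank K₁ ↥B :=
    Nat.eq_of_mul_eq_mul_left Module.finrank_pos h1.symm
  exact (IntermediateField.eq_of_le_of_finrank_le hBN hfr.le).symm

theorem aux_pigeon (X : IntermediateField K₁ L)
    [FiniteDimensional K₁ X] [Algebra.IsSeparable K₁ X] {T : Set ℕ} (hT : T.Infinite)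
    (f : ℕ → IntermediateField K₁ L) (hf : ∀ i ∈ T, f i ≤ X) :
    ∃ Y, {i | i ∈ T ∧ f i = Y}.Infinite := by
  haveI : Algebra.IsAlgebraic K₁ ↥X := Algebra.IsAlgebraic.of_finite K₁ ↥X
  haveI : Finite (IntermediateField K₁ ↥X) :=
    Field.finite_intermediateField_of_exists_primitive_element K₁ ↥X
      (Field.exists_primitive_element K₁ ↥X)
  haveI : Infinite ↥T := hT.to_subtype
  obtain ⟨Y₀, hY₀⟩ := Finite.exists_infinite_fiber
    (fun i : ↥T => IntermediateField.comap X.val (f (i : ℕ)))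
  refine ⟨IntermediateField.map X.val Y₀, ?_⟩
  have key : ∀ i ∈ T, IntermediateField.comap X.val (f i) = Y₀ →
      f i = IntermediateField.map X.val Y₀ := by
    intro i hi h
    rw [← h]
    ext z
    constructor
    · intro hz
      exact ⟨⟨z, hf i hi hz⟩, hz, rfl⟩
    · rintro ⟨w, hw, rfl⟩
      exact hw
  have hsub : Subtype.val ''
      ((fun i : ↥T => IntermediateField.comap X.val (f (i : ℕ))) ⁻¹' {Y₀})
      ⊆ {i | i ∈ T ∧ f i = IntermediateField.map X.val Y₀} := by
    rintro _ ⟨⟨i, hi⟩, hmem, rfl⟩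
    exact ⟨hi, key i hi (by simpa using hmem)⟩
  exact Set.Infinite.mono hsub
    ((Set.infinite_coe_iff.1 hY₀).image Subtype.val_injective.injOn)

end Aux2

/-- Let `K ⊆ K₁ ⊆ K₂ ⊆ L` with `L/K` Galois and `K₂/K` finite Galois. If there is an
infinite pairwise linearly disjoint family of finite proper subextensions of `L/K₁` of the
same degree which are Galois over `K`, then there is also such a family for `L/K₂`. -/
theorem condition_L_up
    (K K₁ K₂ L : Type*) [Field K] [Field K₁] [Field K₂] [Field L]
    [Algebra K K₁] [Algebra K K₂] [Algebra K L]
    [Algebra K₁ K₂] [Algebra K₁ L] [Algebra K₂ L]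
    [IsScalarTower K K₁ K₂] [IsScalarTower K K₂ L] [IsScalarTower K K₁ L]
    [IsScalarTower K₁ K₂ L]
    [IsGalois K L] [FiniteDimensional K K₂] [IsGalois K K₂]
    (hcond : ∃ n : ℕ, 1 < n ∧ ∃ F : ℕ → IntermediateField K₁ L,
      Function.Injective F ∧
      (∀ i, FiniteDimensional K₁ (F i) ∧ Module.finrank K₁ (F i) = n ∧ F i ≠ ⊥ ∧
        IsGalois K ((F i).restrictScalars K)) ∧
      (∀ i j, i ≠ j → (F i).LinearDisjoint (F j))) :
    ∃ n : ℕ, 1 < n ∧ ∃ F : ℕ → IntermediateField K₂ L,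
      Function.Injective F ∧
      (∀ i, FiniteDimensional K₂ (F i) ∧ Module.finrank K₂ (F i) = n ∧ F i ≠ ⊥ ∧
        IsGalois K ((F i).restrictScalars K)) ∧
      (∀ i j, i ≠ j → (F i).LinearDisjoint (F j)) := by
  classical
  obtain ⟨n, hn, F, hFinj, hF, hFdisj⟩ := hcond
  haveI hsepK1L : Algebra.IsSeparable K₁ L := Algebra.isSeparable_tower_top_of_isSeparable K K₁ L
  haveI hsepK2L : Algebra.IsSeparable K₂ L := Algebra.isSeparable_tower_top_of_isSeparable K K₂ L
  set C : IntermediateField K₁ L := (IsScalarTower.toAlgHom K₁ K₂ L).fieldRange with hCdef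
  obtain ⟨e, hcomm⟩ : ∃ e : K₂ ≃ₐ[K₁] ↥C, algebraMap K₂ L = (algebraMap ↥C L) ∘ e :=
    ⟨AlgEquiv.ofInjectiveField (IsScalarTower.toAlgHom K₁ K₂ L), _root_.funext fun x =>
      (AlgEquiv.ofInjective_apply (IsScalarTower.toAlgHom K₁ K₂ L)
        (IsScalarTower.toAlgHom K₁ K₂ L).toRingHom.injective x).symm⟩
  haveI : FiniteDimensional K₁ K₂ := FiniteDimensional.right K K₁ K₂
  haveI : FiniteDimensional K₁ ↥C := LinearEquiv.finiteDimensional e.toLinearEquiv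
  -- Step A: pass to an infinite set of indices on which `F i ⊓ C = ⊥`
  obtain ⟨D, hD⟩ := aux_pigeon C Set.infinite_univ (fun i => F i ⊓ C) (fun i _ => inf_le_right)
  set S : Set ℕ := {i | i ∈ Set.univ ∧ F i ⊓ C = D} with hSdef
  have hSinf : S.Infinite := hD
  have hDbot : D = ⊥ := by
    obtain ⟨i, hi⟩ := hSinf.nonempty
    obtain ⟨j, hj, hne⟩ : ∃ j ∈ S, j ≠ i := by
      obtain ⟨j, hj⟩ := (hSinf.diff (Set.finite_singleton i)).nonempty
      exact ⟨j, hj.1, by simpa using hj.2⟩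
    have h1 : D ≤ F i ⊓ F j :=
      le_inf ((le_of_eq hi.2.symm).trans inf_le_left) ((le_of_eq hj.2.symm).trans inf_le_left)
    rw [(hFdisj i j hne.symm).inf_eq_bot] at h1
    exact le_bot_iff.1 h1
  have hSC : ∀ i ∈ S, F i ⊓ C = ⊥ := fun i hi => hDbot ▸ hi.2
  -- basic facts about the F i
  have hGalK : ∀ i, IsGalois K ↥((F i).restrictScalars K) := fun i => (hF i).2.2.2
  have hNorm1 : ∀ i, Normal K₁ ↥(F i) := by
    intro i
    haveI : Normal K ↥(F i) := (hGalK i).to_normal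
    exact Normal.tower_top_of_normal K K₁ ↥(F i)
  -- the lifted family
  set Efam : ℕ → IntermediateField K₂ L := fun i => adjoin K₂ ((F i : Set L)) with hEdef
  have hres : ∀ i, (Efam i).restrictScalars K₁ = C ⊔ F i := by
    intro i
    rw [show (Efam i).restrictScalars K₁ = (adjoin ↥C ((F i : Set L))).restrictScalars K₁ from
      restrictScalars_adjoin_of_algEquiv e hcomm _,
      restrictScalars_adjoin_eq_sup, adjoin_self]
  have hfdK1 : ∀ i, FiniteDimensional K₁ ↥(Efam i) := by
    intro i
    haveI : FiniteDimensional K₁ ↥(F i) := (hF i).1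
    have h1 : FiniteDimensional K₁ ↥((Efam i).restrictScalars K₁) := by
      rw [hres i]; exact IntermediateField.finiteDimensional_sup C (F i)
    exact h1
  have hfdK2 : ∀ i, FiniteDimensional K₂ ↥(Efam i) := by
    intro i
    haveI := hfdK1 i
    exact FiniteDimensional.right K₁ K₂ ↥(Efam i)
  have hfinrank : ∀ i ∈ S, Module.finrank K₂ ↥(Efam i) = n := by
    intro i hi
    haveI := hfdK1 i
    haveI : FiniteDimensional K₁ ↥(F i) := (hF i).1
    haveI := hNorm1 i
    have ht : Module.finrank K₁ K₂ * Module.finrank K₂ ↥(Efam i)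
        = Module.finrank K₁ ↥(Efam i) := Module.finrank_mul_finrank K₁ K₂ ↥(Efam i)
    have h2 : Module.finrank K₁ ↥((Efam i).restrictScalars K₁)
        = Module.finrank K₁ ↥(C ⊔ F i) := by rw [hres i]
    have h2' : Module.finrank K₁ ↥(Efam i) = Module.finrank K₁ ↥(C ⊔ F i) := h2
    have h3 : Module.finrank K₁ ↥(F i ⊔ C)
        = Module.finrank K₁ ↥(F i) * Module.finrank K₁ ↥C :=
      aux_finrank_sup_of_normal (F i) C (hSC i hi)
    have h4 : Module.finrank K₁ K₂ = Module.finrank K₁ ↥C := e.toLinearEquiv.finrank_eq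
    have h5 : Module.finrank K₁ ↥(F i) = n := (hF i).2.1
    have hkey : Module.finrank K₁ K₂ * Module.finrank K₂ ↥(Efam i)
        = Module.finrank K₁ K₂ * n := by
      rw [ht, h2', sup_comm C (F i), h3, h5, h4, mul_comm]
    exact Nat.eq_of_mul_eq_mul_left Module.finrank_pos hkey
  have hEbot : ∀ i ∈ S, Efam i ≠ ⊥ := by
    intro i hi h
    have := hfinrank i hi
    rw [h, IntermediateField.finrank_bot] at this
    omega
  -- Galois over K
  have hGalE : ∀ i, IsGalois K ↥((Efam i).restrictScalars K) := by
    intro i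
    have hKres : (Efam i).restrictScalars K = ((Efam i).restrictScalars K₁).restrictScalars K :=
      rfl
    rw [hKres, hres i, ← restrictScalars_sup]
    have hCK : C.restrictScalars K = (IsScalarTower.toAlgHom K K₂ L).fieldRange := rfl
    haveI : Normal K ↥(C.restrictScalars K) := by
      rw [hCK]
      exact Normal.of_algEquiv (AlgEquiv.ofInjectiveField (IsScalarTower.toAlgHom K K₂ L))
    haveI : Normal K ↥((F i).restrictScalars K) := (hGalK i).to_normal
    exact ⟨⟩
  have hNormE2 : ∀ i, Normal K₂ ↥(Efam i) := by
    intro i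
    haveI : Normal K ↥(Efam i) := (hGalE i).to_normal
    exact Normal.tower_top_of_normal K K₂ ↥(Efam i)
  -- the key finiteness claim
  have hstar : ∀ i ∈ S, {j | j ∈ S ∧ Efam i ⊓ Efam j ≠ ⊥}.Finite := by
    intro i hi
    by_contra hbad
    have hbad : {j | j ∈ S ∧ Efam i ⊓ Efam j ≠ ⊥}.Infinite := hbad
    haveI := hfdK2 i
    obtain ⟨N, hN⟩ := aux_pigeon (K₁ := K₂) (Efam i) hbad
      (fun j => Efam i ⊓ Efam j) (fun j _ => inf_le_left)
    obtain ⟨j₀, hj₀⟩ := hN.nonempty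
    have hNbot : N ≠ ⊥ := hj₀.2 ▸ hj₀.1.2
    set N' := N.restrictScalars K₁ with hN'def
    have hbotres : (⊥ : IntermediateField K₂ L).restrictScalars K₁ = C := by
      ext x
      simp only [mem_restrictScalars, IntermediateField.mem_bot, hCdef,
        AlgHom.mem_fieldRange]
      constructor
      · rintro ⟨y, rfl⟩; exact ⟨y, rfl⟩
      · rintro ⟨y, rfl⟩; exact ⟨y, rfl⟩
    have hCN' : C ≤ N' := by
      rw [← hbotres]
      intro x hx
      exact (bot_le : (⊥ : IntermediateField K₂ L) ≤ N) hx
    have hNEi : N ≤ Efam i := hj₀.2 ▸ inf_le_left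
    have hNE : N' ≤ (Efam i).restrictScalars K₁ := fun x hx => hNEi hx
    haveI : FiniteDimensional K₁ ↥((Efam i).restrictScalars K₁) := hfdK1 i
    haveI : FiniteDimensional K₁ ↥N' := FiniteDimensional.of_injective
      (IntermediateField.inclusion hNE).toLinearMap (IntermediateField.inclusion hNE).injective
    obtain ⟨P, hP⟩ := aux_pigeon (K₁ := K₁) N' hN (fun j => F j ⊓ N') (fun j _ => inf_le_right)
    obtain ⟨j₁, hj₁⟩ := hP.nonempty
    obtain ⟨j₂, hj₂, hne⟩ : ∃ j₂ ∈ {j | j ∈ {j | j ∈ {j | j ∈ S ∧ Efam i ⊓ Efam j ≠ ⊥} ∧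
        Efam i ⊓ Efam j = N} ∧ F j ⊓ N' = P}, j₂ ≠ j₁ := by
      obtain ⟨j₂, hj₂⟩ := (hP.diff (Set.finite_singleton j₁)).nonempty
      exact ⟨j₂, hj₂.1, by simpa using hj₂.2⟩
    have hPbot : P ≠ ⊥ := by
      intro hPb
      haveI : Normal K₁ ↥(F j₁) := hNorm1 j₁
      haveI : FiniteDimensional K₁ ↥(F j₁) := (hF j₁).1
      have hj₁S : j₁ ∈ S := hj₁.1.1.1
      have h1 : F j₁ ⊓ C = ⊥ := hSC j₁ hj₁S
      have hNEj : N ≤ Efam j₁ := hj₁.1.2 ▸ inf_le_right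
      have h2 : N' ≤ F j₁ ⊔ C := by
        rw [sup_comm (F j₁) C, ← hres j₁]
        exact fun x hx => hNEj hx
      have h3 : F j₁ ⊓ N' = ⊥ := by rw [hj₁.2, hPb]
      have h4 := aux_eq_of_inf_eq_bot (F j₁) C N' h1 hCN' h2 h3
      exact hNbot (IntermediateField.restrictScalars_injective K₁ (h4.trans hbotres.symm))
    have hPle : P ≤ F j₁ ⊓ F j₂ := by
      have t1 : P ≤ F j₁ := by rw [← hj₁.2]; exact inf_le_left
      have t2 : P ≤ F j₂ := by rw [← hj₂.2]; exact inf_le_left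
      exact le_inf t1 t2
    rw [(hFdisj j₁ j₂ (Ne.symm hne)).inf_eq_bot] at hPle
    exact hPbot (le_bot_iff.1 hPle)
  -- greedy selection of a pairwise disjoint subfamily
  set r : ℕ → ℕ → Prop := fun a b => a ≠ b ∧ Efam a ⊓ Efam b = ⊥ with hrdef
  haveI : Std.Symm r := ⟨fun a b hab => ⟨hab.1.symm, by rw [inf_comm]; exact hab.2⟩⟩
  obtain ⟨g, hgS, hgr⟩ := exists_seq_of_forall_finset_exists' (· ∈ S) r (by
    intro s hs
    have hbadfin : ((↑s : Set ℕ) ∪ ⋃ x ∈ s, {j | j ∈ S ∧ Efam x ⊓ Efam j ≠ ⊥}).Finite :=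
      s.finite_toSet.union (Set.Finite.biUnion s.finite_toSet fun x hx => hstar x (hs x hx))
    obtain ⟨y, hy⟩ := (hSinf.diff hbadfin).nonempty
    refine ⟨y, hy.1, fun x hx => ⟨?_, ?_⟩⟩
    · rintro rfl
      exact hy.2 (Or.inl hx)
    · by_contra h
      exact hy.2 (Or.inr (Set.mem_biUnion hx ⟨hy.1, h⟩)))
  refine ⟨n, hn, fun k => Efam (g k), ?_, ?_, ?_⟩
  · intro a b hab
    have hab' : Efam (g a) = Efam (g b) := hab
    by_contra hne
    have h1 := (hgr hne).2
    rw [hab', inf_idem] at h1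
    exact hEbot (g b) (hgS b) h1
  · intro k
    exact ⟨hfdK2 (g k), hfinrank _ (hgS k), hEbot _ (hgS k), hGalE _⟩
  · intro a b hab
    haveI := hNormE2 (g a)
    haveI := hfdK2 (g a)
    haveI := hfdK2 (g b)
    exact aux_linearDisjoint_of_normal (K₁ := K₂) (Efam (g a)) (Efam (g b)) (hgr hab).2
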